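/- For any p ∈ (0,1) and ε ∈ (0, p), setting q = p − ε we have ((1−p)q/(p(1−q)))^{1−q} ≤ 1 − (p − q). Equivalently, ln((1−p)(p−ε)/((1−p+ε)p)) ≤ ln(1−ε)/(1−p+ε). -/

import Mathlib

theorem stmt_3 (p ε : ℝ) (hp : p ∈ Set.Ioo (0:ℝ) 1) (hε : ε ∈ Set.Ioo 0 p) :
    (((1 - p) * (p - ε)) / (p * (1 - (p - ε)))) ^ (1 - (p - ε)) ≤ 1 - ε ∧
    Real.log (((1 - p) * (p - ε)) / ((1 - p + ε) * p)) ≤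
      Real.log (1 - ε) / (1 - p + ε) := by
  obtain ⟨hp0, hp1⟩ := hp
  obtain ⟨hε0, hεp⟩ := hε
  set q : ℝ := p - ε with hq
  have hq0 : 0 < q := by simp only [hq]; linarith
  have hq1 : q < 1 := by simp only [hq]; linarith
  have hden : 0 < p * (1 - q) := mul_pos hp0 (by linarith)
  set x : ℝ := ((1 - p) * q) / (p * (1 - q)) with hx
  have hx0 : 0 < x := div_pos (mul_pos (by linarith) hq0) hden
  have hx1 : x - 1 = -ε / (p * (1 - q)) := by
    rw [hx, div_sub_one hden.ne']; congr 1; rw [hq]; ring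
  have key : x ^ (1 - q) ≤ 1 + (1 - q) * (x - 1) := by
    have := rpow_one_add_le_one_add_mul_self (s := x - 1) (by linarith)
      (p := 1 - q) (by linarith) (by linarith)
    simpa using this
  have hcalc : 1 + (1 - q) * (x - 1) = 1 - ε / p := by
    rw [hx1, mul_div_left_comm, mul_comm p, ← div_div, div_self (by linarith : (0:ℝ) < 1 - q).ne']; ring
  have h1 : x ^ (1 - q) ≤ 1 - ε := by
    refine key.trans ?_
    rw [hcalc]
    have : ε ≤ ε / p := by
      rw [le_div_iff₀ hp0]; nlinarith
    linarith
  refine ⟨h1, ?_⟩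
  have h1q : (0:ℝ) < 1 - q := by linarith
  have hlog : (1 - q) * Real.log x ≤ Real.log (1 - ε) := by
    have := Real.log_le_log (Real.rpow_pos_of_pos hx0 _) h1
    rwa [Real.log_rpow hx0] at this
  have heq : ((1 - p) * (p - ε)) / ((1 - p + ε) * p) = x := by
    rw [hx, hq]; ring_nf
  have h1q' : 1 - p + ε = 1 - q := by rw [hq]; ring
  rw [heq, h1q', le_div_iff₀ h1q, mul_comm]
  exact hlog
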